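/- The relation of commensurability up to finite kernels is an equivalence relation on (isomorphism classes of) groups: G ≅_fk H iff there exist finite index subgroups G₁ ≤ G, H₁ ≤ H and finite normal subgroups M₁ ⊴ G₁, N₁ ⊴ H₁ with G₁/M₁ ≅ H₁/N₁. In particular, ≅_fk is reflexive, symmetric, and transitive. -/

import Mathlib

/-- Two groups are commensurable up to finite kernels, `G ≅_fk H`, if there exist finite
index subgroups `G₁ ≤ G`, `H₁ ≤ H` and finite normal subgroups `M₁ ⊴ G₁`, `N₁ ⊴ H₁` with
`G₁/M₁ ≅ H₁/N₁`. -/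
def CommensurableUpToFiniteKernels (G H : Type*) [Group G] [Group H] : Prop :=
  ∃ (G₁ : Subgroup G) (H₁ : Subgroup H) (M₁ : Subgroup G₁) (N₁ : Subgroup H₁)
    (hM : M₁.Normal) (hN : N₁.Normal),
    G₁.index ≠ 0 ∧ H₁.index ≠ 0 ∧ Finite M₁ ∧ Finite N₁ ∧
    (haveI := hM; haveI := hN; Nonempty ((G₁ ⧸ M₁) ≃* (H₁ ⧸ N₁)))

open QuotientGroup

/-- Helper relation: `G` and `H` have isomorphic quotients by finite normal subgroups. -/
private def QFK (G H : Type*) [Group G] [Group H] : Prop :=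
  ∃ (M : Subgroup G) (N : Subgroup H) (hM : M.Normal) (hN : N.Normal),
    Finite M ∧ Finite N ∧
    (haveI := hM; haveI := hN; Nonempty ((G ⧸ M) ≃* (H ⧸ N)))

private lemma finite_le {G : Type*} [Group G] {A B : Subgroup G} (h : A ≤ B) [Finite B] :
    Finite A :=
  Finite.of_injective (Subgroup.inclusion h) (Subgroup.inclusion_injective h)

private lemma finite_subgroupOf {G : Type*} [Group G] (A K : Subgroup G) [Finite A] :
    Finite (A.subgroupOf K) := by
  haveI : Finite ((A.subgroupOf K).map K.subtype) := by
    rw [Subgroup.subgroupOf_map_subtype]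
    exact finite_le inf_le_left
  exact Finite.of_equiv _
    ((A.subgroupOf K).equivMapOfInjective K.subtype K.subtype_injective).symm.toEquiv

private lemma finite_map {G H : Type*} [Group G] [Group H] (f : G →* H) (M : Subgroup G)
    [Finite M] : Finite (M.map f) := by
  have : ((M.map f : Set H)).Finite := by
    rw [Subgroup.coe_map]
    exact (Set.toFinite (M : Set G)).image _
  exact this.to_subtype

/-- Preimage of a finite subgroup under a hom with finite kernel is finite. -/
private lemma finite_comap {G H : Type*} [Group G] [Group H] (f : G →* H) (Q : Subgroup H)
    [Finite f.ker] [Finite Q] : Finite (Q.comap f) := by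
  set K := Q.comap f
  set g := f.domRestrict K with hg
  haveI : Finite g.range := by
    rw [hg, MonoidHom.restrict_range]
    exact finite_le (Subgroup.map_comap_le f Q)
  haveI : Finite (K ⧸ g.ker) := Finite.of_equiv _ (QuotientGroup.quotientKerEquivRange g).symm.toEquiv
  haveI : Finite g.ker := by
    rw [hg, MonoidHom.ker_restrict]
    exact finite_subgroupOf _ _
  exact Finite.of_equiv _ (Subgroup.groupEquivQuotientProdSubgroup (s := g.ker)).symm

private lemma QFK.refl (G : Type*) [Group G] : QFK G G :=
  ⟨⊥, ⊥, inferInstance, inferInstance, inferInstance, inferInstance, ⟨MulEquiv.refl _⟩⟩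

private lemma QFK.symm {G H : Type*} [Group G] [Group H] (h : QFK G H) : QFK H G := by
  obtain ⟨M, N, hM, hN, fM, fN, ⟨e⟩⟩ := h
  exact ⟨N, M, hN, hM, fN, fM, ⟨e.symm⟩⟩

private lemma QFK.of_mulEquiv_left {G G' H : Type*} [Group G] [Group G'] [Group H]
    (e : G ≃* G') (h : QFK G H) : QFK G' H := by
  obtain ⟨M, N, hM, hN, fM, fN, ⟨φ⟩⟩ := h
  haveI := hM; haveI := hN
  haveI : (M.map (e : G →* G')).Normal := hM.map _ e.surjective
  haveI : Finite (M.map (e : G →* G')) := finite_map _ M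
  exact ⟨M.map (e : G →* G'), N, inferInstance, hN, inferInstance, fN,
    ⟨((QuotientGroup.congr M _ e rfl).symm.trans φ)⟩⟩

private lemma QFK.of_mulEquiv_right {G H H' : Type*} [Group G] [Group H] [Group H']
    (e : H ≃* H') (h : QFK G H) : QFK G H' :=
  ((h.symm).of_mulEquiv_left e).symm

/-- Lifting: if `G ⧸ M ≃* H ⧸ N` with `M, N` finite normal and `N ≤ N'` with `N'` finite
normal, then there is a finite normal `M'` with `G ⧸ M' ≃* H ⧸ N'`. -/
private lemma lift_quot {G H : Type*} [Group G] [Group H] (M : Subgroup G) (N N' : Subgroup H)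
    [hM : M.Normal] [hN : N.Normal] [hN' : N'.Normal] (hle : N ≤ N')
    [Finite M] [Finite N'] (φ : (G ⧸ M) ≃* (H ⧸ N)) :
    ∃ (M' : Subgroup G) (hM' : M'.Normal), Finite M' ∧
      (haveI := hM'; Nonempty ((G ⧸ M') ≃* (H ⧸ N'))) := by
  set Q : Subgroup (H ⧸ N) := N'.map (QuotientGroup.mk' N) with hQ
  haveI hQn : Q.Normal := hN'.map _ (QuotientGroup.mk'_surjective N)
  haveI : Finite Q := finite_map _ _
  set Q' : Subgroup (G ⧸ M) := Q.comap φ.toMonoidHom with hQ'def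
  haveI hQ'n : Q'.Normal := hQn.comap _
  haveI : Finite Q' := by
    haveI : Finite (Q.map φ.symm.toMonoidHom) := finite_map _ _
    have : Q' = Q.map φ.symm.toMonoidHom := by
      rw [hQ'def]
      ext x
      simp [Subgroup.mem_comap, Subgroup.mem_map]
      constructor
      · intro hx; exact ⟨φ x, hx, by simp⟩
      · rintro ⟨y, hy, rfl⟩; simpa using hy
    rw [this]; infer_instance
  set M' : Subgroup G := Q'.comap (QuotientGroup.mk' M) with hM'def
  haveI hM'n : M'.Normal := hQ'n.comap _
  haveI : Finite (QuotientGroup.mk' M).ker := by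
    rw [QuotientGroup.ker_mk']; infer_instance
  haveI fM' : Finite M' := finite_comap _ _
  have hMM' : M ≤ M' := by
    intro x hx
    show QuotientGroup.mk' M x ∈ Q'
    have hx1 : QuotientGroup.mk' M x = 1 := by
      rwa [← MonoidHom.mem_ker, QuotientGroup.ker_mk']
    rw [hx1]; exact Q'.one_mem
  have hmap1 : M'.map (QuotientGroup.mk' M) = Q' :=
    Subgroup.map_comap_eq_self_of_surjective (QuotientGroup.mk'_surjective M) _
  have hmap2 : Q'.map φ.toMonoidHom = Q :=
    Subgroup.map_comap_eq_self_of_surjective φ.surjective _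
  refine ⟨M', hM'n, fM', ?_⟩
  haveI : (M'.map (QuotientGroup.mk' M)).Normal := hmap1 ▸ hQ'n
  have e1 : (G ⧸ M') ≃* ((G ⧸ M) ⧸ M'.map (QuotientGroup.mk' M)) :=
    (QuotientGroup.quotientQuotientEquivQuotient M M' hMM').symm
  have e1' : ((G ⧸ M) ⧸ M'.map (QuotientGroup.mk' M)) ≃* ((G ⧸ M) ⧸ Q') :=
    QuotientGroup.quotientMulEquivOfEq hmap1
  have e2 : ((G ⧸ M) ⧸ Q') ≃* ((H ⧸ N) ⧸ Q) := QuotientGroup.congr Q' Q φ hmap2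
  have e3 : ((H ⧸ N) ⧸ Q) ≃* H ⧸ N' :=
    QuotientGroup.quotientQuotientEquivQuotient N N' hle
  exact ⟨((e1.trans e1').trans e2).trans e3⟩

private lemma QFK.trans {G H K : Type*} [Group G] [Group H] [Group K]
    (h1 : QFK G H) (h2 : QFK H K) : QFK G K := by
  obtain ⟨M₁, N₁, hM₁, hN₁, fM₁, fN₁, ⟨φ⟩⟩ := h1
  obtain ⟨N₂, P, hN₂, hP, fN₂, fP, ⟨ψ⟩⟩ := h2
  haveI := hM₁; haveI := hN₁; haveI := hN₂; haveI := hP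
  set N : Subgroup H := N₁ ⊔ N₂ with hNdef
  haveI : N.Normal := Subgroup.sup_normal N₁ N₂
  haveI : Finite N := by
    have : ((N : Set H)).Finite := by
      rw [hNdef]
      show ((N₁ ⊔ N₂ : Subgroup H) : Set H).Finite
      rw [Subgroup.mul_normal N₁ N₂]
      exact Set.Finite.mul (Set.toFinite _) (Set.toFinite _)
    exact this.to_subtype
  obtain ⟨M', hM', fM', ⟨α⟩⟩ := lift_quot M₁ N₁ N le_sup_left φ
  obtain ⟨P', hP', fP', ⟨β⟩⟩ := lift_quot P N₂ N le_sup_right ψ.symm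
  exact ⟨M', P', hM', hP', fM', fP', ⟨α.trans β.symm⟩⟩

/-- Restriction: if `QFK G H` and `H₂ ≤ H` has finite index, then there is a finite index
`G₂ ≤ G` with `QFK G₂ H₂`. -/
private lemma QFK.restrict {G H : Type*} [Group G] [Group H] (h : QFK G H)
    (H₂ : Subgroup H) (hH₂ : H₂.index ≠ 0) :
    ∃ (G₂ : Subgroup G), G₂.index ≠ 0 ∧ QFK G₂ H₂ := by
  obtain ⟨M, N, hM, hN, fM, fN, ⟨φ⟩⟩ := h
  haveI := hM; haveI := hN; haveI := fM; haveI := fN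
  set Q : Subgroup (H ⧸ N) := H₂.map (QuotientGroup.mk' N) with hQ
  have hQidx : Q.index ≠ 0 := by
    rw [hQ, Subgroup.index_map]
    rw [MonoidHom.range_eq_top_of_surjective _ (QuotientGroup.mk'_surjective N),
      Subgroup.index_top, mul_one, QuotientGroup.ker_mk']
    intro h0
    have hd := Subgroup.index_dvd_of_le (le_sup_left : H₂ ≤ H₂ ⊔ N)
    rw [h0] at hd
    exact hH₂ (Nat.eq_zero_of_zero_dvd hd)
  set Q' : Subgroup (G ⧸ M) := Q.comap φ.toMonoidHom with hQ'
  have hQ'idx : Q'.index ≠ 0 := by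
    rw [hQ', Subgroup.index_comap,
      MonoidHom.range_eq_top_of_surjective _ φ.surjective, Subgroup.relIndex_top_right]
    exact hQidx
  set G₂ : Subgroup G := Q'.comap (QuotientGroup.mk' M) with hG₂
  have hG₂idx : G₂.index ≠ 0 := by
    rw [hG₂, Subgroup.index_comap,
      MonoidHom.range_eq_top_of_surjective _ (QuotientGroup.mk'_surjective M),
      Subgroup.relIndex_top_right]
    exact hQ'idx
  have hmapG : G₂.map (QuotientGroup.mk' M) = Q' :=
    Subgroup.map_comap_eq_self_of_surjective (QuotientGroup.mk'_surjective M) _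
  have hmapQ : Q'.map φ.toMonoidHom = Q :=
    Subgroup.map_comap_eq_self_of_surjective φ.surjective _
  set g := (QuotientGroup.mk' M).domRestrict G₂ with hg
  have hker : g.ker = M.subgroupOf G₂ := by
    rw [hg, MonoidHom.ker_restrict, QuotientGroup.ker_mk']
  have hrange : g.range = Q' := by rw [hg, MonoidHom.restrict_range, hmapG]
  haveI : (M.subgroupOf G₂).Normal := hM.subgroupOf _
  haveI : (N.subgroupOf H₂).Normal := hN.subgroupOf _
  have e1 : (↥G₂ ⧸ M.subgroupOf G₂) ≃* ↥Q' :=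
    (QuotientGroup.quotientMulEquivOfEq hker.symm).trans
      ((QuotientGroup.quotientKerEquivRange g).trans (MulEquiv.subgroupCongr hrange))
  have mid : ↥Q' ≃* ↥Q :=
    (Q'.equivMapOfInjective φ.toMonoidHom φ.injective).trans (MulEquiv.subgroupCongr hmapQ)
  set g' := (QuotientGroup.mk' N).domRestrict H₂ with hg'
  have hker' : g'.ker = N.subgroupOf H₂ := by
    rw [hg', MonoidHom.ker_restrict, QuotientGroup.ker_mk']
  have hrange' : g'.range = Q := by rw [hg', MonoidHom.restrict_range, hQ]
  have e2 : (↥H₂ ⧸ N.subgroupOf H₂) ≃* ↥Q :=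
    (QuotientGroup.quotientMulEquivOfEq hker'.symm).trans
      ((QuotientGroup.quotientKerEquivRange g').trans (MulEquiv.subgroupCongr hrange'))
  exact ⟨G₂, hG₂idx, M.subgroupOf G₂, N.subgroupOf H₂, inferInstance, inferInstance,
    finite_subgroupOf _ _, finite_subgroupOf _ _, ⟨(e1.trans mid).trans e2.symm⟩⟩

private lemma comm_iff (G H : Type*) [Group G] [Group H] :
    CommensurableUpToFiniteKernels G H ↔
      ∃ (G₁ : Subgroup G) (H₁ : Subgroup H), G₁.index ≠ 0 ∧ H₁.index ≠ 0 ∧ QFK G₁ H₁ := by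
  constructor
  · rintro ⟨G₁, H₁, M₁, N₁, hM, hN, h1, h2, h3, h4, h5⟩
    exact ⟨G₁, H₁, h1, h2, M₁, N₁, hM, hN, h3, h4, h5⟩
  · rintro ⟨G₁, H₁, h1, h2, M₁, N₁, hM, hN, h3, h4, h5⟩
    exact ⟨G₁, H₁, M₁, N₁, hM, hN, h1, h2, h3, h4, h5⟩

/-- Commensurability up to finite kernels is an equivalence relation on groups: it is
reflexive, symmetric, and transitive. -/
theorem stmt13 :
    (∀ (G : Type*) [Group G], CommensurableUpToFiniteKernels G G) ∧
    (∀ (G H : Type*) [Group G] [Group H],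
      CommensurableUpToFiniteKernels G H → CommensurableUpToFiniteKernels H G) ∧
    (∀ (G H K : Type*) [Group G] [Group H] [Group K],
      CommensurableUpToFiniteKernels G H → CommensurableUpToFiniteKernels H K →
        CommensurableUpToFiniteKernels G K) := by
  refine ⟨?_, ?_, ?_⟩
  · intro G _
    rw [comm_iff]
    exact ⟨⊤, ⊤, by simp [Subgroup.index_top], by simp [Subgroup.index_top], QFK.refl _⟩
  · intro G H _ _ h
    rw [comm_iff] at h ⊢
    obtain ⟨G₁, H₁, h1, h2, q⟩ := h
    exact ⟨H₁, G₁, h2, h1, q.symm⟩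
  · intro G H K _ _ _ hGH hHK
    rw [comm_iff] at hGH hHK ⊢
    obtain ⟨G₁, H₁, hG1, hH1, q1⟩ := hGH
    obtain ⟨H₂, K₁, hH2, hK1, q2⟩ := hHK
    set H₃ : Subgroup H := H₁ ⊓ H₂ with hH₃
    have h3 : H₃.index ≠ 0 := Subgroup.index_inf_ne_zero hH1 hH2
    have hA : (H₃.subgroupOf H₁).index ≠ 0 := by
      intro h0
      have hrel := Subgroup.relIndex_mul_index (inf_le_left : H₁ ⊓ H₂ ≤ H₁)
      have : H₃.relIndex H₁ = 0 := h0
      rw [this, zero_mul] at hrel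
      exact h3 hrel.symm
    have hB : (H₃.subgroupOf H₂).index ≠ 0 := by
      intro h0
      have hrel := Subgroup.relIndex_mul_index (inf_le_right : H₁ ⊓ H₂ ≤ H₂)
      have : H₃.relIndex H₂ = 0 := h0
      rw [this, zero_mul] at hrel
      exact h3 hrel.symm
    obtain ⟨G₂, hG2, qG⟩ := q1.restrict (H₃.subgroupOf H₁) hA
    obtain ⟨K₂, hK2, qK⟩ := q2.symm.restrict (H₃.subgroupOf H₂) hB
    have eAB : ↥(H₃.subgroupOf H₁) ≃* ↥(H₃.subgroupOf H₂) :=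
      (Subgroup.subgroupOfEquivOfLe inf_le_left).trans
        (Subgroup.subgroupOfEquivOfLe inf_le_right).symm
    have qGK : QFK ↥G₂ ↥K₂ := (qG.of_mulEquiv_right eAB).trans qK.symm
    refine ⟨G₂.map G₁.subtype, K₂.map K₁.subtype, ?_, ?_, ?_⟩
    · rw [Subgroup.index_map, Subgroup.ker_subtype, Subgroup.range_subtype, sup_bot_eq]
      exact Nat.mul_ne_zero hG2 hG1
    · rw [Subgroup.index_map, Subgroup.ker_subtype, Subgroup.range_subtype, sup_bot_eq]
      exact Nat.mul_ne_zero hK2 hK1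
    · exact (qGK.of_mulEquiv_left
        (G₂.equivMapOfInjective G₁.subtype G₁.subtype_injective)).of_mulEquiv_right
        (K₂.equivMapOfInjective K₁.subtype K₁.subtype_injective)
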